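/- Suppose that for each n ∈ ℕ the sequence (h_{n,k})_{k∈ℕ} is a regular sequence of functions on [0,1]. Define g_k := ∑_{n=0}^k 2^{-2n-1}·h_{n,k-n} for k ∈ ℕ. Then (g_k)_{k∈ℕ} is a regular sequence, and Ω((g_k)) ⊆ ⋂_{n∈ℕ} Ω((h_{n,k})_{k∈ℕ}); that is, every x ∈ [0,1] at which the partial sums of ∑_k g_k(x) are bounded has, for every n, bounded partial sums of ∑_k h_{n,k}(x). -/
import Mathlib


open MeasureTheory Filter Set

noncomputable section

/-- A sequence of functions on `[0,1]` is *regular* if each member is continuous and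
nonnegative on `[0,1]` and has integral over `[0,1]` strictly less than `2⁻ⁿ`. -/
def RegularSeq (h : ℕ → ℝ → ℝ) : Prop :=
  ∀ n : ℕ, ContinuousOn (h n) (Set.Icc 0 1) ∧
    (∀ x ∈ Set.Icc (0:ℝ) 1, 0 ≤ h n x) ∧
    (∫ x in (0:ℝ)..1, h n x) < (1/2 : ℝ) ^ n

/-- The set `Ω(𝔥)` of points of `[0,1]` at which the partial sums of `∑ hₙ(x)` are
bounded above. -/
def Omega (h : ℕ → ℝ → ℝ) : Set ℝ :=
  {x ∈ Set.Icc (0:ℝ) 1 | ∃ γ : ℝ, ∀ m : ℕ, ∑ n ∈ Finset.range (m+1), h n x ≤ γ}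

/-- A subset `X ⊆ [0,1]` is *almost full* if `Ω(𝔥) ⊆ X` for some regular sequence `𝔥`. -/
def AlmostFull (X : Set ℝ) : Prop :=
  ∃ h : ℕ → ℝ → ℝ, RegularSeq h ∧ Omega h ⊆ X

/-- If each `(h_{n,k})_k` is regular and `g_k = ∑_{n=0}^k 2^{-2n-1} h_{n,k-n}`, then `(g_k)`
is regular and `Ω((g_k)) ⊆ ⋂ₙ Ω((h_{n,k})_k)`. -/
theorem stmt5 (hseq : ℕ → ℕ → ℝ → ℝ) (hreg : ∀ n, RegularSeq (hseq n))
    (g : ℕ → ℝ → ℝ)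
    (hg : ∀ k x, g k x = ∑ n ∈ Finset.range (k+1), (1/2 : ℝ)^(2*n+1) * hseq n (k-n) x) :
    RegularSeq g ∧ Omega g ⊆ ⋂ n, Omega (hseq n) := by
  have hint : ∀ n k : ℕ, IntervalIntegrable (hseq n k) volume 0 1 := by
    intro n k
    apply ContinuousOn.intervalIntegrable
    rw [Set.uIcc_of_le (by norm_num : (0:ℝ) ≤ 1)]
    exact (hreg n k).1
  have hgfun : ∀ k, g k = fun x => ∑ n ∈ Finset.range (k+1),
      (1/2 : ℝ)^(2*n+1) * hseq n (k-n) x := fun k => funext (hg k)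
  have hgnonneg : ∀ k, ∀ x ∈ Set.Icc (0:ℝ) 1, 0 ≤ g k x := by
    intro k x hx
    rw [hg]
    apply Finset.sum_nonneg
    intro n _
    exact mul_nonneg (by positivity) ((hreg n (k-n)).2.1 x hx)
  constructor
  · intro k
    refine ⟨?_, hgnonneg k, ?_⟩
    · rw [hgfun]
      apply continuousOn_finset_sum
      intro n _
      exact continuousOn_const.mul (hreg n (k-n)).1
    · rw [hgfun]
      simp only []
      rw [intervalIntegral.integral_finset_sum
        (fun n _ => ((hint n (k-n)).const_mul _))]
      have h1 : ∑ n ∈ Finset.range (k+1),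
          (∫ x in (0:ℝ)..1, (1/2 : ℝ)^(2*n+1) * hseq n (k-n) x)
          < ∑ n ∈ Finset.range (k+1), (1/2:ℝ)^(k+n+1) := by
        apply Finset.sum_lt_sum_of_nonempty (Finset.nonempty_range_add_one)
        intro n hn
        rw [intervalIntegral.integral_const_mul]
        have hnk : n ≤ k := Nat.lt_succ_iff.mp (Finset.mem_range.mp hn)
        have he : (1/2:ℝ)^(k+n+1) = (1/2:ℝ)^(2*n+1) * (1/2:ℝ)^(k-n) := by
          rw [← pow_add]
          congr 1
          omega
        rw [he]
        exact mul_lt_mul_of_pos_left ((hreg n (k-n)).2.2) (by positivity)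
      have h2 : ∑ n ∈ Finset.range (k+1), (1/2:ℝ)^(k+n+1) ≤ (1/2:ℝ)^k := by
        have : ∑ n ∈ Finset.range (k+1), (1/2:ℝ)^(k+n+1)
            = (1/2:ℝ)^(k+1) * ∑ n ∈ Finset.range (k+1), (1/2:ℝ)^n := by
          rw [Finset.mul_sum]
          apply Finset.sum_congr rfl
          intro n _
          rw [← pow_add]
          congr 1
          omega
        rw [this]
        have hgs : ∑ n ∈ Finset.range (k+1), (1/2:ℝ)^n ≤ 2 := by
          rw [geom_sum_eq (by norm_num : (1/2:ℝ) ≠ 1)]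
          rw [div_le_iff_of_neg (by norm_num : (1/2:ℝ) - 1 < 0)]
          have : (0:ℝ) ≤ (1/2:ℝ)^(k+1) := by positivity
          linarith
        calc (1/2:ℝ)^(k+1) * ∑ n ∈ Finset.range (k+1), (1/2:ℝ)^n
            ≤ (1/2:ℝ)^(k+1) * 2 := by
              apply mul_le_mul_of_nonneg_left hgs (by positivity)
          _ = (1/2:ℝ)^k := by ring
      linarith
  · intro x hx
    obtain ⟨hx1, γ, hγ⟩ := hx
    simp only [Set.mem_iInter]
    intro n
    refine ⟨hx1, (2:ℝ)^(2*n+1) * γ, ?_⟩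
    intro m
    have step1 : ∀ k, hseq n k x ≤ (2:ℝ)^(2*n+1) * g (n+k) x := by
      intro k
      have hsingle : (1/2:ℝ)^(2*n+1) * hseq n ((n+k)-n) x ≤ g (n+k) x := by
        rw [hg]
        apply Finset.single_le_sum
          (f := fun j => (1/2:ℝ)^(2*j+1) * hseq j ((n+k)-j) x)
        · intro j _
          exact mul_nonneg (by positivity) ((hreg j _).2.1 x hx1)
        · exact Finset.mem_range.mpr (by omega)
      have hnk : (n+k)-n = k := by omega
      rw [hnk] at hsingle
      have h2 : (2:ℝ)^(2*n+1) * ((1/2:ℝ)^(2*n+1) * hseq n k x)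
          ≤ (2:ℝ)^(2*n+1) * g (n+k) x :=
        mul_le_mul_of_nonneg_left hsingle (by positivity)
      calc hseq n k x = (2:ℝ)^(2*n+1) * ((1/2:ℝ)^(2*n+1) * hseq n k x) := by
            rw [← mul_assoc, ← mul_pow]
            norm_num
        _ ≤ _ := h2
    calc ∑ k ∈ Finset.range (m+1), hseq n k x
        ≤ ∑ k ∈ Finset.range (m+1), (2:ℝ)^(2*n+1) * g (n+k) x :=
          Finset.sum_le_sum (fun k _ => step1 k)
      _ = (2:ℝ)^(2*n+1) * ∑ k ∈ Finset.range (m+1), g (n+k) x := by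
          rw [Finset.mul_sum]
      _ ≤ (2:ℝ)^(2*n+1) * ∑ j ∈ Finset.range (n+m+1), g j x := by
          apply mul_le_mul_of_nonneg_left _ (by positivity)
          have : ∑ k ∈ Finset.range (m+1), g (n+k) x
              = ∑ j ∈ Finset.Ico n (n+m+1), g j x := by
            rw [Finset.sum_Ico_eq_sum_range,
              show n+m+1-n = m+1 from by omega]
          rw [this]
          apply Finset.sum_le_sum_of_subset_of_nonneg
          · intro j hj
            rw [Finset.mem_range]
            exact (Finset.mem_Ico.mp hj).2
          · intro j _ _
            exact hgnonneg j x hx1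
      _ ≤ (2:ℝ)^(2*n+1) * γ :=
          mul_le_mul_of_nonneg_left (hγ (n+m)) (by positivity)
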